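/- Let N ≥ 1, let x_1, …, x_{N+1} ∈ ℝ^N be affinely independent, fix α ≥ 0 and A* > 0, let y* lie in the open convex hull co{x_1,…,x_{N+1}}, and set s_i = A* e^{−α‖x_i − y*‖}/‖x_i − y*‖² (noise-free measurements). For y in the open convex hull write d_i = ‖x_i − y‖ (note d_i > 0) and let Â(y) = (Σ_{i=1}^{N+1} s_i)/(Σ_{i=1}^{N+1} e^{−α d_i}/d_i²) be the maximum-likelihood intensity estimate. If the gradient of the profit function vanishes at y, i.e. Σ_{i=1}^{N+1} (s_i d_i²/e^{−α d_i} − Â(y))(α + 2/d_i)(e^{−α d_i}/d_i³)(x_i − y) = 0, then y = y* and Â(y) = A*. Hence y* is the unique stationary point of the profit function in the open convex hull, and it is its global maximizer there. -/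

import Mathlib

open Real Finset

/-- For `a, t > 0`, `a log t - t ≤ a log a - a` (the map `t ↦ a log t - t` peaks at `t = a`). -/
lemma log_profit_le {a t : ℝ} (ha : 0 < a) (ht : 0 < t) :
    a * Real.log t - t ≤ a * Real.log a - a := by
  have h := Real.log_le_sub_one_of_pos (div_pos ht ha)
  rw [Real.log_div ht.ne' ha.ne'] at h
  have h2 : a * (Real.log t - Real.log a) ≤ a * (t / a - 1) :=
    mul_le_mul_of_nonneg_left h ha.le
  have h3 : a * (t / a - 1) = t - a := by field_simp
  nlinarith [h2]

/-- Strict monotonicity of `d ↦ e^{-αd}/d²` (decreasing). -/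
lemma signal_strict_anti {α a b : ℝ} (hα : 0 ≤ α) (ha : 0 < a) (hab : a < b) :
    Real.exp (-α * b) / b ^ 2 < Real.exp (-α * a) / a ^ 2 := by
  have hb : 0 < b := ha.trans hab
  have h1 : Real.exp (-α * b) ≤ Real.exp (-α * a) := by
    apply Real.exp_le_exp.mpr; nlinarith
  have h2 : a ^ 2 < b ^ 2 := by nlinarith
  calc Real.exp (-α * b) / b ^ 2 ≤ Real.exp (-α * a) / b ^ 2 := by
        apply div_le_div_of_nonneg_right h1 (by positivity)
    _ < Real.exp (-α * a) / a ^ 2 :=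
        div_lt_div_of_pos_left (Real.exp_pos _) (by positivity) h2

set_option maxHeartbeats 1000000 in
/-- Theorem 3 (main result): with noise-free measurements
`s i = A* e^{-α‖x i - y*‖}/‖x i - y*‖²` from a source `y*` in the open convex hull
(interior of the convex hull) of `N + 1` affinely independent sensors in `ℝ^N`, and
`Â(y) = (∑ s i)/(∑ e^{-α d i}/d i²)` the maximum-likelihood intensity estimate
(`d i = ‖x i - y‖`), any point `y` of the open convex hull at which the gradient
`∑ i (s i d i²/e^{-α d i} - Â(y))(α + 2/d i)(e^{-α d i}/d i³)(x i - y)` of the profit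
function vanishes satisfies `y = y*` and `Â(y) = A*`; hence `y*` is the unique
stationary point of the profit function `J` in the open convex hull and its global
maximizer there. -/
theorem unique_stationary_point_profit {N : ℕ} (hN : 1 ≤ N)
    (x : Fin (N + 1) → EuclideanSpace ℝ (Fin N))
    (hx : AffineIndependent ℝ x)
    (α Astar : ℝ) (hα : 0 ≤ α) (hAstar : 0 < Astar)
    (ystar : EuclideanSpace ℝ (Fin N))
    (hystar : ystar ∈ interior (convexHull ℝ (Set.range x)))
    (s : Fin (N + 1) → ℝ)
    (hsdef : ∀ i, s i = Astar * exp (-α * ‖x i - ystar‖) / ‖x i - ystar‖ ^ 2)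
    (Ahat : EuclideanSpace ℝ (Fin N) → ℝ)
    (hAhat : ∀ w, Ahat w = (∑ i, s i) / (∑ i, exp (-α * ‖x i - w‖) / ‖x i - w‖ ^ 2))
    (J : EuclideanSpace ℝ (Fin N) → ℝ)
    (hJ : ∀ w, J w = ∑ i, (s i * log (Ahat w * exp (-α * ‖x i - w‖) / ‖x i - w‖ ^ 2)
                           - Ahat w * exp (-α * ‖x i - w‖) / ‖x i - w‖ ^ 2)) :
    (∀ y ∈ interior (convexHull ℝ (Set.range x)),
      (∑ i, ((s i * ‖x i - y‖ ^ 2 / exp (-α * ‖x i - y‖) - Ahat y)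
              * (α + 2 / ‖x i - y‖)
              * (exp (-α * ‖x i - y‖) / ‖x i - y‖ ^ 3)) • (x i - y)) = 0 →
        y = ystar ∧ Ahat y = Astar) ∧
    (∀ y ∈ interior (convexHull ℝ (Set.range x)), J y ≤ J ystar) := by
  classical
  -- the sensors form an affine basis
  have htop : affineSpan ℝ (Set.range x) = ⊤ := by
    rw [hx.affineSpan_eq_top_iff_card_eq_finrank_add_one]
    simp [finrank_euclideanSpace]
  let b : AffineBasis (Fin (N + 1)) ℝ (EuclideanSpace ℝ (Fin N)) := ⟨x, hx, htop⟩
  have hb : ⇑b = x := rfl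
  have hcoordpos : ∀ w ∈ interior (convexHull ℝ (Set.range x)), ∀ i, 0 < b.coord i w := by
    intro w hw i
    rw [← hb, b.interior_convexHull] at hw
    exact hw i
  -- points of the interior differ from the sensors
  have hne : ∀ w ∈ interior (convexHull ℝ (Set.range x)), ∀ i, x i ≠ w := by
    intro w hw i hxw
    have hnt : Nontrivial (Fin (N + 1)) := Fin.nontrivial_iff_two_le.mpr (by omega)
    obtain ⟨j, hj⟩ := exists_ne i
    have h0 := hcoordpos w hw j
    rw [← hxw, ← hb, b.coord_apply] at h0
    simp [hj] at h0
  have hdpos : ∀ w ∈ interior (convexHull ℝ (Set.range x)), ∀ i, 0 < ‖x i - w‖ := by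
    intro w hw i
    exact norm_pos_iff.mpr (sub_ne_zero.mpr (hne w hw i))
  -- positivity facts
  have hspos : ∀ i, 0 < s i := by
    intro i
    rw [hsdef i]
    have := hdpos ystar hystar i
    positivity
  have hfpos : ∀ w ∈ interior (convexHull ℝ (Set.range x)), ∀ i,
      0 < exp (-α * ‖x i - w‖) / ‖x i - w‖ ^ 2 := by
    intro w hw i
    have := hdpos w hw i
    positivity
  have hsumspos : 0 < ∑ i, s i := Finset.sum_pos (fun i _ => hspos i) univ_nonempty
  have hsumfpos : ∀ w ∈ interior (convexHull ℝ (Set.range x)),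
      0 < ∑ i, exp (-α * ‖x i - w‖) / ‖x i - w‖ ^ 2 := fun w hw =>
    Finset.sum_pos (fun i _ => hfpos w hw i) univ_nonempty
  have hApos : ∀ w ∈ interior (convexHull ℝ (Set.range x)), 0 < Ahat w := by
    intro w hw
    rw [hAhat]
    exact div_pos hsumspos (hsumfpos w hw)
  -- Ahat at the true source is the true intensity
  have hAystar : Ahat ystar = Astar := by
    rw [hAhat]
    have hsum : ∑ i, s i = Astar * ∑ i, exp (-α * ‖x i - ystar‖) / ‖x i - ystar‖ ^ 2 := by
      rw [Finset.mul_sum]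
      exact Finset.sum_congr rfl fun i _ => by rw [hsdef i, mul_div_assoc]
    rw [hsum, mul_div_assoc, div_self (hsumfpos ystar hystar).ne', mul_one]
  -- geometric fact: if all sensors are at least as close to w as to an interior point z, w = z
  have hgeo : ∀ z w : EuclideanSpace ℝ (Fin N), z ∈ interior (convexHull ℝ (Set.range x)) →
      (∀ i, ‖x i - w‖ ≤ ‖x i - z‖) → w = z := by
    intro z w hz hle
    set u : EuclideanSpace ℝ (Fin N) := w - z with hu
    obtain ⟨γ, hγpos, hγsum, hγcomb⟩ :
        ∃ γ : Fin (N + 1) → ℝ, (∀ i, 0 < γ i) ∧ (∑ i, γ i = 1) ∧ (∑ i, γ i • x i = z) :=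
      ⟨fun i => b.coord i z, hcoordpos z hz, b.sum_coord_apply_eq_one z, by
        rw [← hb]; exact b.linear_combination_coord_eq_self z⟩
    have hkey : ∑ i, γ i • (x i - z) = 0 := by
      have : ∑ i, γ i • (x i - z)
          = (∑ i, γ i • x i) - (∑ i, γ i) • z := by
        rw [Finset.sum_smul, ← Finset.sum_sub_distrib]
        exact Finset.sum_congr rfl fun i _ => smul_sub _ _ _
      rw [this, hγcomb, hγsum, one_smul, sub_self]
    have hinner0 : ∑ i, γ i * (inner ℝ (x i - z) u : ℝ) = 0 := by
      have h1 : (inner ℝ (∑ i, γ i • (x i - z)) u : ℝ)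
          = ∑ i, γ i * (inner ℝ (x i - z) u : ℝ) := by
        rw [sum_inner]
        exact Finset.sum_congr rfl fun i _ => real_inner_smul_left _ _ _
      rw [hkey] at h1
      simpa using h1.symm
    have hterm : ∀ i, ‖u‖ ^ 2 ≤ 2 * (inner ℝ (x i - z) u : ℝ) := by
      intro i
      have hxw : x i - w = (x i - z) - u := by rw [hu]; abel
      have hexp : ‖(x i - z) - u‖ ^ 2
          = ‖x i - z‖ ^ 2 - 2 * (inner ℝ (x i - z) u : ℝ) + ‖u‖ ^ 2 :=
        norm_sub_sq_real _ _
      have hsq : ‖x i - w‖ ^ 2 ≤ ‖x i - z‖ ^ 2 := by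
        have := hle i
        nlinarith [norm_nonneg (x i - w)]
      rw [hxw, hexp] at hsq
      linarith
    have hsumineq : ‖u‖ ^ 2 ≤ 0 := by
      have h1 : ∑ i, γ i * ‖u‖ ^ 2
          ≤ ∑ i, γ i * (2 * (inner ℝ (x i - z) u : ℝ)) := by
        apply Finset.sum_le_sum
        intro i _
        exact mul_le_mul_of_nonneg_left (hterm i) (hγpos i).le
      have h2 : ∑ i, γ i * ‖u‖ ^ 2 = ‖u‖ ^ 2 := by
        rw [← Finset.sum_mul, hγsum, one_mul]
      have h3 : ∑ i, γ i * (2 * (inner ℝ (x i - z) u : ℝ)) = 0 := by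
        have : ∑ i, γ i * (2 * (inner ℝ (x i - z) u : ℝ))
            = 2 * ∑ i, γ i * (inner ℝ (x i - z) u : ℝ) := by
          rw [Finset.mul_sum]
          exact Finset.sum_congr rfl fun i _ => by ring
        rw [this, hinner0, mul_zero]
      rw [h2] at h1
      rw [h3] at h1
      exact h1
    have : ‖u‖ = 0 := by nlinarith [norm_nonneg u, sq_nonneg ‖u‖]
    have : u = 0 := norm_eq_zero.mp this
    rw [hu] at this
    exact sub_eq_zero.mp this
  -- main stationarity argument
  have hmain : ∀ y ∈ interior (convexHull ℝ (Set.range x)),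
      (∑ i, ((s i * ‖x i - y‖ ^ 2 / exp (-α * ‖x i - y‖) - Ahat y)
              * (α + 2 / ‖x i - y‖)
              * (exp (-α * ‖x i - y‖) / ‖x i - y‖ ^ 3)) • (x i - y)) = 0 →
        y = ystar ∧ Ahat y = Astar := by
    intro y hy hgrad
    obtain ⟨c, hcdef⟩ : ∃ c : Fin (N + 1) → ℝ, ∀ i, c i =
        (s i * ‖x i - y‖ ^ 2 / exp (-α * ‖x i - y‖) - Ahat y)
          * (α + 2 / ‖x i - y‖) * (exp (-α * ‖x i - y‖) / ‖x i - y‖ ^ 3) :=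
      ⟨_, fun i => rfl⟩
    have hgrad' : ∑ i, c i • (x i - y) = 0 := by
      simp only [hcdef]; exact hgrad
    obtain ⟨q, hqdef⟩ : ∃ q : Fin (N + 1) → ℝ, ∀ i, q i =
        (α + 2 / ‖x i - y‖) / ‖x i - y‖ := ⟨_, fun i => rfl⟩
    have hqpos : ∀ i, 0 < q i := by
      intro i
      have hd := hdpos y hy i
      rw [hqdef i]
      exact div_pos (add_pos_of_nonneg_of_pos hα (by positivity)) hd
    have hcq : ∀ i, c i
        = (s i - Ahat y * (exp (-α * ‖x i - y‖) / ‖x i - y‖ ^ 2)) * q i := by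
      intro i
      have hd := (hdpos y hy i).ne'
      have he := (Real.exp_pos (-α * ‖x i - y‖)).ne'
      rw [hcdef i, hqdef i]
      field_simp
    -- linear dependence forces proportionality to barycentric coordinates
    obtain ⟨β, hβpos, hβsum, hβcomb⟩ :
        ∃ β : Fin (N + 1) → ℝ, (∀ i, 0 < β i) ∧ (∑ i, β i = 1) ∧ (∑ i, β i • x i = y) :=
      ⟨fun i => b.coord i y, hcoordpos y hy, b.sum_coord_apply_eq_one y, by
        rw [← hb]; exact b.linear_combination_coord_eq_self y⟩
    obtain ⟨t, htdef⟩ : ∃ t : ℝ, t = ∑ i, c i := ⟨_, rfl⟩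
    have hzero : ∀ i, c i - t * β i = 0 := by
      have hw0 : ∑ i, (c i - t * β i) = 0 := by
        rw [Finset.sum_sub_distrib, ← Finset.mul_sum, hβsum, mul_one, htdef, sub_self]
      have hw1 : ∑ i, (c i - t * β i) • x i = 0 := by
        have e1 : ∑ i, (c i - t * β i) • x i
            = (∑ i, c i • x i) - t • ∑ i, β i • x i := by
          rw [Finset.smul_sum, ← Finset.sum_sub_distrib]
          refine Finset.sum_congr rfl fun i _ => ?_
          rw [sub_smul, mul_smul t (β i) (x i)]
        have e2 : ∑ i, c i • (x i - y) = (∑ i, c i • x i) - t • y := by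
          rw [htdef, Finset.sum_smul, ← Finset.sum_sub_distrib]
          exact Finset.sum_congr rfl fun i _ => smul_sub _ _ _
        rw [e1, hβcomb, ← e2, hgrad']
      intro i
      exact hx.eq_zero_of_sum_eq_zero hw0 hw1 i (Finset.mem_univ i)
    -- the sum of residuals vanishes by definition of Ahat
    have hbal : ∑ i, (s i - Ahat y * (exp (-α * ‖x i - y‖) / ‖x i - y‖ ^ 2)) = 0 := by
      rw [Finset.sum_sub_distrib, ← Finset.mul_sum, hAhat,
        div_mul_cancel₀ _ (hsumfpos y hy).ne', sub_self]
    -- hence t = 0 and all residuals vanish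
    have hres : ∀ i, s i - Ahat y * (exp (-α * ‖x i - y‖) / ‖x i - y‖ ^ 2)
        = t * (β i / q i) := by
      intro i
      have h1 : c i = t * β i := sub_eq_zero.mp (hzero i)
      have h2 : s i - Ahat y * (exp (-α * ‖x i - y‖) / ‖x i - y‖ ^ 2) = c i / q i := by
        rw [hcq i, mul_div_cancel_right₀ _ (hqpos i).ne']
      rw [h2, h1, mul_div_assoc]
    have ht0 : t = 0 := by
      have h1 : (0 : ℝ) = t * ∑ i, β i / q i := by
        rw [← hbal, Finset.mul_sum]
        exact Finset.sum_congr rfl fun i _ => hres i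
      have h2 : 0 < ∑ i, β i / q i :=
        Finset.sum_pos (fun i _ => div_pos (hβpos i) (hqpos i)) univ_nonempty
      rcases mul_eq_zero.mp h1.symm with h | h
      · exact h
      · exact absurd h h2.ne'
    have heq : ∀ i, s i = Ahat y * (exp (-α * ‖x i - y‖) / ‖x i - y‖ ^ 2) := by
      intro i
      have h := hres i
      rw [ht0, zero_mul] at h
      linarith [h]
    -- identity between true and estimated signal models
    have hkey : ∀ i, Astar * (exp (-α * ‖x i - ystar‖) / ‖x i - ystar‖ ^ 2)
        = Ahat y * (exp (-α * ‖x i - y‖) / ‖x i - y‖ ^ 2) := by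
      intro i
      rw [← heq i, hsdef i, mul_div_assoc]
    have hAy := hApos y hy
    have hyy : y = ystar := by
      rcases le_total (Ahat y) Astar with h | h
      · -- Ahat y ≤ Astar : sensors are at least as close to y as to ystar
        refine hgeo ystar y hystar ?_
        intro i
        by_contra hlt
        push_neg at hlt
        have hmono := signal_strict_anti hα (hdpos ystar hystar i) hlt
        have h1 : Ahat y * (exp (-α * ‖x i - y‖) / ‖x i - y‖ ^ 2)
            ≤ Astar * (exp (-α * ‖x i - y‖) / ‖x i - y‖ ^ 2) :=
          mul_le_mul_of_nonneg_right h (hfpos y hy i).le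
        nlinarith [hkey i, hfpos y hy i, hfpos ystar hystar i]
      · -- Astar ≤ Ahat y : sensors are at least as close to ystar as to y
        refine (hgeo y ystar hy ?_).symm
        intro i
        by_contra hlt
        push_neg at hlt
        have hmono := signal_strict_anti hα (hdpos y hy i) hlt
        have h1 : Astar * (exp (-α * ‖x i - ystar‖) / ‖x i - ystar‖ ^ 2)
            ≤ Ahat y * (exp (-α * ‖x i - ystar‖) / ‖x i - ystar‖ ^ 2) :=
          mul_le_mul_of_nonneg_right h (hfpos ystar hystar i).le
        nlinarith [hkey i, hfpos y hy i, hfpos ystar hystar i]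
    exact ⟨hyy, by rw [hyy, hAystar]⟩
  refine ⟨hmain, ?_⟩
  -- global maximality
  intro y hy
  rw [hJ y, hJ ystar]
  apply Finset.sum_le_sum
  intro i _
  have hstar : Ahat ystar * exp (-α * ‖x i - ystar‖) / ‖x i - ystar‖ ^ 2 = s i := by
    rw [hAystar, ← hsdef i]
  rw [hstar]
  have hz : 0 < Ahat y * exp (-α * ‖x i - y‖) / ‖x i - y‖ ^ 2 := by
    have hd := hdpos y hy i
    have hA := hApos y hy
    positivity
  exact log_profit_le (hspos i) hz
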